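/- For the star instance on n+1 vertices (center c with positive edges to all other n vertices, and all other edges negative), every clustering has at least n-1 disagreements. Consequently, combined with an LP solution of value n/2, the integrality gap of the standard LP is at least 2 - 2/n. -/

import Mathlib

attribute [local instance] Classical.propDecidable

def Disagree {V : Type*} (pos : V → V → Bool) (c : V → ℕ) (u v : V) : Prop :=
  (pos u v = true ∧ c u ≠ c v) ∨ (pos u v = false ∧ c u = c v)

noncomputable def disagreements {V : Type*} [Fintype V] [LinearOrder V]
    (pos : V → V → Bool) (c : V → ℕ) : ℕ :=
  (Finset.univ.filter (fun p : V × V => p.1 < p.2 ∧ Disagree pos c p.1 p.2)).card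

lemma star_lb (n : ℕ)
    (pos : Fin (n + 1) → Fin (n + 1) → Bool)
    (hpos : pos = fun u v => decide (u ≠ v ∧ (u = 0 ∨ v = 0)))
    (f : Fin (n + 1) → ℕ) : n - 1 ≤ disagreements pos f := by
  classical
  subst hpos
  set D : Finset (Fin (n+1) × Fin (n+1)) :=
    Finset.univ.filter (fun p => p.1 < p.2 ∧ Disagree
      (fun u v => decide (u ≠ v ∧ (u = 0 ∨ v = 0))) f p.1 p.2) with hD
  suffices h : n - 1 ≤ D.card by
    refine h.trans (Finset.card_le_card fun p hp => ?_)
    rw [hD] at hp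
    simp only [Finset.mem_filter] at hp ⊢
    exact hp
  set T : Finset (Fin (n+1)) := Finset.univ.filter (fun v => v ≠ 0) with hT
  have hTcard : T.card = n := by
    rw [hT, Finset.filter_ne', Finset.card_erase_of_mem (Finset.mem_univ _)]
    simp
  set S : Finset (Fin (n+1)) := T.filter (fun v => f v = f 0) with hS
  set A' : Finset (Fin (n+1)) := T.filter (fun v => ¬ f v = f 0) with hA'
  have hsum : S.card + A'.card = n := by
    rw [hS, hA', Finset.card_filter_add_card_filter_not, hTcard]
  set A : Finset (Fin (n+1) × Fin (n+1)) := A'.image (fun v => ((0 : Fin (n+1)), v)) with hA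
  have hAcard : A.card = A'.card := by
    rw [hA]
    exact Finset.card_image_of_injective _ (fun a b h => by simpa using h)
  have hAsub : A ⊆ D := by
    intro p hp
    rw [hA] at hp
    obtain ⟨v, hv, rfl⟩ := Finset.mem_image.mp hp
    rw [hA', hT, Finset.mem_filter, Finset.mem_filter] at hv
    obtain ⟨⟨_, hv0⟩, hvf⟩ := hv
    rw [hD, Finset.mem_filter]
    refine ⟨Finset.mem_univ _, Fin.pos_of_ne_zero hv0, Or.inl ⟨?_, fun h => hvf h.symm⟩⟩
    simp [Ne.symm hv0]
  rcases Finset.eq_empty_or_nonempty S with hSe | hSne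
  · have h0 : S.card = 0 := by rw [hSe]; simp
    have h1 : A'.card = n := by omega
    have h2 : A.card ≤ D.card := Finset.card_le_card hAsub
    omega
  · set m : Fin (n+1) := S.min' hSne with hm
    have hmS : m ∈ S := Finset.min'_mem _ _
    have hm0 : m ≠ 0 := by
      rw [hS, hT, Finset.mem_filter, Finset.mem_filter] at hmS; exact hmS.1.2
    have hmf : f m = f 0 := by
      rw [hS, Finset.mem_filter] at hmS; exact hmS.2
    set B : Finset (Fin (n+1) × Fin (n+1)) := (S.erase m).image (fun v => (m, v)) with hB
    have hBcard : B.card = S.card - 1 := by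
      rw [hB, Finset.card_image_of_injective _ (fun a b h => by simpa using h),
        Finset.card_erase_of_mem hmS]
    have hBsub : B ⊆ D := by
      intro p hp
      rw [hB] at hp
      obtain ⟨v, hv, rfl⟩ := Finset.mem_image.mp hp
      have hlt : m < v := Finset.min'_lt_of_mem_erase_min' _ hSne hv
      have hvS : v ∈ S := Finset.mem_of_mem_erase hv
      have hv0 : v ≠ 0 := by
        rw [hS, hT, Finset.mem_filter, Finset.mem_filter] at hvS; exact hvS.1.2
      have hvf : f v = f 0 := by
        rw [hS, Finset.mem_filter] at hvS; exact hvS.2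
      rw [hD, Finset.mem_filter]
      refine ⟨Finset.mem_univ _, hlt, Or.inr ⟨?_, by rw [hmf, hvf]⟩⟩
      simp [hm0, hv0]
    have hdisj : Disjoint A B := by
      rw [Finset.disjoint_left]
      intro p hpA hpB
      rw [hA] at hpA; rw [hB] at hpB
      obtain ⟨v, _, rfl⟩ := Finset.mem_image.mp hpA
      obtain ⟨w, _, hw⟩ := Finset.mem_image.mp hpB
      have : m = 0 := congrArg Prod.fst hw
      exact hm0 this
    have hsub : A ∪ B ⊆ D := Finset.union_subset hAsub hBsub
    have := Finset.card_le_card hsub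
    rw [Finset.card_union_of_disjoint hdisj, hAcard, hBcard] at this
    have hS1 : 1 ≤ S.card := Finset.card_pos.mpr hSne
    omega

theorem star_integrality_gap (n : ℕ)
    (pos : Fin (n + 1) → Fin (n + 1) → Bool)
    (hpos : pos = fun u v => decide (u ≠ v ∧ (u = 0 ∨ v = 0))) :
    (∀ f : Fin (n + 1) → ℕ, n - 1 ≤ disagreements pos f) ∧
    (∀ f : Fin (n + 1) → ℕ,
      (2 - 2 / (n : ℝ)) * ((n : ℝ) / 2) ≤ (disagreements pos f : ℝ)) := by
  refine ⟨fun f => star_lb n pos hpos f, fun f => ?_⟩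
  rcases Nat.eq_zero_or_pos n with rfl | hn
  · simp
  · have hne : (n : ℝ) ≠ 0 := Nat.cast_ne_zero.mpr hn.ne'
    have h1 : (2 - 2 / (n : ℝ)) * ((n : ℝ) / 2) = (n : ℝ) - 1 := by
      field_simp
    rw [h1]
    have h2 := star_lb n pos hpos f
    have : ((n - 1 : ℕ) : ℝ) ≤ (disagreements pos f : ℝ) := Nat.cast_le.mpr h2
    rw [Nat.cast_sub hn] at this
    simpa using this
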